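/- Let O be a commutative unital ring and A an O-module. Let (R, d^R) be a chain complex of projective O-modules concentrated in degrees ≤ −1 (O-modules R_{-1}, R_{-2}, … with O-linear maps d^R : R_{-i-1} → R_{-i}, d^R ∘ d^R = 0) together with an O-linear map π^R : R_{-1} → A satisfying π^R ∘ d^R = 0. Then there exist: a chain complex (E, d^E) of projective O-modules concentrated in degrees ≤ −1 together with an O-linear map π^E : E_{-1} → A such that the augmented complex ⋯ → E_{-2} → E_{-1} → A → 0 is exact (π^E is surjective, ker π^E = im(d^E : E_{-2} → E_{-1}), and ker(d^E : E_{-i} → E_{-i+1}) = im(d^E : E_{-i-1} → E_{-i}) for all i ≥ 2), and an injective chain map ι : R → E with π^E ∘ ι_{-1} = π^R, such that in every degree ι(R_{-i}) is a direct summand of E_{-i} (it admits a projective O-module complement). -/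

import Mathlib

universe u



section FreeRes
variable (O : Type u) [CommRing O]

/-- The canonical surjection from the free module on a module onto the module. -/
noncomputable def S3eps (M : ModuleCat.{u} O) : (M →₀ O) →ₗ[O] M :=
  Finsupp.linearCombination O id

lemma S3eps_surj (M : ModuleCat.{u} O) : Function.Surjective (S3eps O M) :=
  fun m => ⟨Finsupp.single m 1, by simp [S3eps]⟩

variable (A : Type u) [AddCommGroup A] [Module O A]

/-- Iterated kernels: the modules of which the free resolution is built. -/
noncomputable def S3K : ℕ → ModuleCat.{u} O
  | 0 => ModuleCat.of O A
  | n+1 => ModuleCat.of O (LinearMap.ker (S3eps O (S3K n)))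

/-- The free resolution modules. -/
noncomputable abbrev S3P (n : ℕ) : Type u := (S3K O A n) →₀ O

noncomputable def S3πP : S3P O A 0 →ₗ[O] A := S3eps O (S3K O A 0)

noncomputable def S3dP (n : ℕ) : S3P O A (n+1) →ₗ[O] S3P O A n :=
  (LinearMap.ker (S3eps O (S3K O A n))).subtype ∘ₗ (S3eps O (S3K O A (n+1)))

lemma S3πP_surj : Function.Surjective (S3πP O A) := S3eps_surj O _

lemma S3P_exact0 : LinearMap.ker (S3πP O A) = LinearMap.range (S3dP O A 0) := by
  ext p
  constructor
  · intro hp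
    obtain ⟨q, hq⟩ := S3eps_surj O (S3K O A 1) (⟨p, hp⟩ : LinearMap.ker (S3eps O (S3K O A 0)))
    exact ⟨q, congrArg (fun z : LinearMap.ker (S3eps O (S3K O A 0)) => (z : S3P O A 0)) hq⟩
  · rintro ⟨q, rfl⟩
    exact (S3eps O (S3K O A 1) q : LinearMap.ker (S3eps O (S3K O A 0))).2

lemma S3P_exact (n : ℕ) :
    LinearMap.ker (S3dP O A n) = LinearMap.range (S3dP O A (n+1)) := by
  ext p
  constructor
  · intro hp
    have hp' : S3eps O (S3K O A (n+1)) p = 0 := Subtype.ext hp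
    obtain ⟨q, hq⟩ := S3eps_surj O (S3K O A (n+2))
      (⟨p, hp'⟩ : LinearMap.ker (S3eps O (S3K O A (n+1))))
    exact ⟨q, congrArg (fun z : LinearMap.ker (S3eps O (S3K O A (n+1))) => (z : S3P O A (n+1))) hq⟩
  · rintro ⟨q, rfl⟩
    have h := (S3eps O (S3K O A (n+2)) q : LinearMap.ker (S3eps O (S3K O A (n+1)))).2
    have h' : S3eps O (S3K O A (n+1)) (S3dP O A (n+1) q) = 0 := h
    exact LinearMap.mem_ker.2
      (congrArg (fun z : LinearMap.ker (S3eps O (S3K O A n)) => (z : S3P O A n)) h')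

end FreeRes

section Lift
variable {O : Type u} [CommRing O] {M M' N : Type u}
  [AddCommGroup M] [Module O M] [AddCommGroup M'] [Module O M'] [AddCommGroup N] [Module O N]

lemma S3lift [Module.Projective O M] (f : M →ₗ[O] N) (g : M' →ₗ[O] N)
    (h : LinearMap.range f ≤ LinearMap.range g) :
    ∃ φ : M →ₗ[O] M', ∀ x, g (φ x) = f x := by
  obtain ⟨φ, hφ⟩ := Module.projective_lifting_property g.rangeRestrict
    (f.codRestrict (LinearMap.range g) fun x => h ⟨x, rfl⟩) g.surjective_rangeRestrict
  exact ⟨φ, fun x => congrArg Subtype.val (LinearMap.congr_fun hφ x)⟩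
end Lift

section Phi
variable (O : Type u) [CommRing O] (A : Type u) [AddCommGroup A] [Module O A]
  (R : ℕ → Type u) [∀ n, AddCommGroup (R n)] [∀ n, Module O (R n)]
  (hRproj : ∀ n, Module.Projective O (R n))
  (dR : ∀ n, R (n + 1) →ₗ[O] R n)
  (hdR : ∀ n, ∀ x : R (n + 2), dR n (dR (n + 1) x) = 0)
  (πR : R 0 →ₗ[O] A)
  (hπR : ∀ x : R 1, πR (dR 0 x) = 0)

/-- Degree-0 comparison map lifting `πR` through `πP`. -/
noncomputable def S3phi0 : R 0 →ₗ[O] S3P O A 0 :=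
  letI := hRproj 0
  (S3lift πR (S3πP O A) (by rw [LinearMap.range_eq_top.2 (S3πP_surj O A)]; exact le_top)).choose

lemma S3phi0_spec : ∀ x, S3πP O A (S3phi0 O A R hRproj πR x) = πR x :=
  letI := hRproj 0
  (S3lift πR (S3πP O A)
    (by rw [LinearMap.range_eq_top.2 (S3πP_surj O A)]; exact le_top)).choose_spec

/-- One step of the comparison-map construction. -/
noncomputable def S3step {n : ℕ} (f : R n →ₗ[O] S3P O A n)
    (hf : LinearMap.range (f ∘ₗ dR n) ≤ LinearMap.range (S3dP O A n)) :
    R (n+1) →ₗ[O] S3P O A (n+1) :=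
  letI := hRproj (n+1)
  (S3lift (f ∘ₗ dR n) (S3dP O A n) hf).choose

lemma S3step_spec {n : ℕ} (f : R n →ₗ[O] S3P O A n)
    (hf : LinearMap.range (f ∘ₗ dR n) ≤ LinearMap.range (S3dP O A n)) :
    ∀ x, S3dP O A n (S3step O A R hRproj dR f hf x) = f (dR n x) :=
  letI := hRproj (n+1)
  (S3lift (f ∘ₗ dR n) (S3dP O A n) hf).choose_spec

noncomputable def S3phiAux :
    ∀ n, Σ' f : R n →ₗ[O] S3P O A n,
      LinearMap.range (f ∘ₗ dR n) ≤ LinearMap.range (S3dP O A n)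
  | 0 => ⟨S3phi0 O A R hRproj πR, by
      rw [← S3P_exact0]
      rintro _ ⟨x, rfl⟩
      simp only [LinearMap.mem_ker, LinearMap.coe_comp, Function.comp_apply]
      rw [S3phi0_spec, hπR]⟩
  | n+1 => ⟨S3step O A R hRproj dR (S3phiAux n).1 (S3phiAux n).2, by
      rw [← S3P_exact]
      rintro _ ⟨x, rfl⟩
      simp only [LinearMap.mem_ker, LinearMap.coe_comp, Function.comp_apply]
      rw [S3step_spec, hdR, map_zero]⟩

noncomputable def S3phi (n : ℕ) : R n →ₗ[O] S3P O A n :=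
  (S3phiAux O A R hRproj dR hdR πR hπR n).1

lemma S3phi_zero : ∀ x, S3πP O A (S3phi O A R hRproj dR hdR πR hπR 0 x) = πR x := by
  rw [S3phi, S3phiAux]
  exact S3phi0_spec O A R hRproj πR

lemma S3phi_chain (n : ℕ) :
    ∀ x, S3dP O A n (S3phi O A R hRproj dR hdR πR hπR (n+1) x)
      = S3phi O A R hRproj dR hdR πR hπR n (dR n x) := by
  rw [S3phi, S3phiAux]
  exact S3step_spec O A R hRproj dR (S3phiAux O A R hRproj dR hdR πR hπR n).1
    (S3phiAux O A R hRproj dR hdR πR hπR n).2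

end Phi

section Cone
variable (O : Type u) [CommRing O] (R : ℕ → Type u)

/-- The shifted complex, `S3Rsh R n = R (n-1)` with `S3Rsh R 0 = 0`. -/
def S3Rsh : ℕ → Type u
  | 0 => PUnit.{u+1}
  | n+1 => R n

variable [∀ n, AddCommGroup (R n)] [∀ n, Module O (R n)]

instance S3RshAddCommGroup : ∀ n, AddCommGroup (S3Rsh R n)
  | 0 => inferInstanceAs (AddCommGroup PUnit)
  | n+1 => inferInstanceAs (AddCommGroup (R n))

instance S3RshModule : ∀ n, Module O (S3Rsh R n)
  | 0 => inferInstanceAs (Module O PUnit.{u+1})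
  | n+1 => inferInstanceAs (Module O (R n))

/-- The identification `S3Rsh R (n+1) = R n`. -/
def S3incl (n : ℕ) : S3Rsh R (n+1) →ₗ[O] R n := LinearMap.id

/-- The (negated) shifted differential. -/
noncomputable def S3dsh (dR : ∀ n, R (n + 1) →ₗ[O] R n) : ∀ n, R n →ₗ[O] S3Rsh R n
  | 0 => 0
  | n+1 => -dR n

lemma S3dsh_d (dR : ∀ n, R (n + 1) →ₗ[O] R n)
    (hdR : ∀ n, ∀ x : R (n + 2), dR n (dR (n + 1) x) = 0) (n : ℕ) (t : R (n+1)) :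
    S3dsh O R dR n (dR n t) = 0 := by
  cases n with
  | zero => simp [S3dsh]
  | succ m =>
    have h : S3dsh O R dR (m+1) (dR (m+1) t) = -(dR m (dR (m+1) t)) := rfl
    rw [h, hdR, neg_zero]
    rfl

end Cone



/-- Over a commutative unital ring `O`, given an `O`-module `A` and a
chain complex `(R, d^R)` of projective `O`-modules concentrated in degrees `≤ -1`
(`R n` playing the role of `R_{-(n+1)}`) with an `O`-linear map `π^R : R_{-1} → A`
satisfying `π^R ∘ d^R = 0`, there exist a projective resolution `(E, d^E, π^E)` of `A`
and an injective chain map `ι : R → E` over `A` whose image is, in every degree, a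
direct summand of `E` admitting a projective complement. -/
theorem statement3 (O : Type u) [CommRing O] (A : Type u) [AddCommGroup A] [Module O A]
    (R : ℕ → Type u) [∀ n, AddCommGroup (R n)] [∀ n, Module O (R n)]
    (hRproj : ∀ n, Module.Projective O (R n))
    (dR : ∀ n, R (n + 1) →ₗ[O] R n)
    (hdR : ∀ n, ∀ x : R (n + 2), dR n (dR (n + 1) x) = 0)
    (πR : R 0 →ₗ[O] A)
    (hπR : ∀ x : R 1, πR (dR 0 x) = 0) :
    ∃ (E : ℕ → ModuleCat.{u} O) (dE : ∀ n, E (n + 1) →ₗ[O] E n) (πE : E 0 →ₗ[O] A)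
      (ι : ∀ n, R n →ₗ[O] E n),
      -- E is a complex of projective modules ...
      (∀ n, Module.Projective O (E n)) ∧
      -- ... which is a resolution of A:
      Function.Surjective πE ∧
      LinearMap.ker πE = LinearMap.range (dE 0) ∧
      (∀ n, LinearMap.ker (dE n) = LinearMap.range (dE (n + 1))) ∧
      -- ι is an injective chain map over A ...
      (∀ n, Function.Injective (ι n)) ∧
      (∀ n, ∀ x : R (n + 1), dE n (ι (n + 1) x) = ι n (dR n x)) ∧
      (∀ x : R 0, πE (ι 0 x) = πR x) ∧
      -- ... whose image is in each degree a direct summand with projective complement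
      (∀ n, ∃ C : Submodule O (E n),
        Module.Projective O C ∧ IsCompl (LinearMap.range (ι n)) C) := by
  classical
  have hRshProj : ∀ n, Module.Projective O (S3Rsh R n) := by
    intro n
    cases n with
    | zero => exact inferInstanceAs (Module.Projective O PUnit.{u+1})
    | succ m => exact hRproj m
  let P : ℕ → Type u := fun n => S3P O A n
  let φ : ∀ n, R n →ₗ[O] P n := S3phi O A R hRproj dR hdR πR hπR
  let dC : ∀ n, (R (n+1) × S3Rsh R (n+1)) →ₗ[O] (R n × S3Rsh R n) := fun n =>
    (dR n ∘ₗ LinearMap.fst O _ _ + S3incl O R n ∘ₗ LinearMap.snd O _ _).prod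
      (S3dsh O R dR n ∘ₗ S3incl O R n ∘ₗ LinearMap.snd O _ _)
  refine ⟨fun n => ModuleCat.of O ((R n × S3Rsh R n) × P n),
    fun n => (dC n).prodMap (S3dP O A n),
    (S3πP O A) ∘ₗ LinearMap.snd O _ _,
    fun n => (LinearMap.id.prod 0).prod (φ n),
    ?_, ?_, ?_, ?_, ?_, ?_, ?_, ?_⟩
  · -- projectivity
    intro n
    haveI := hRshProj n
    haveI := hRproj n
    exact inferInstanceAs (Module.Projective O ((R n × S3Rsh R n) × P n))
  · -- surjectivity of πE
    intro a
    obtain ⟨p, hp⟩ := S3πP_surj O A a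
    exact ⟨((0, 0), p), hp⟩
  · -- ker πE = range dE 0
    apply le_antisymm
    · rintro ⟨⟨r, s⟩, p⟩ hmem
      have hp : p ∈ LinearMap.ker (S3πP O A) := hmem
      rw [S3P_exact0] at hp
      obtain ⟨q, hq⟩ := hp
      refine ⟨((0, r), q), ?_⟩
      haveI : Subsingleton (S3Rsh R 0) := inferInstanceAs (Subsingleton PUnit)
      have hs : s = 0 := Subsingleton.elim s 0
      subst hs
      show ((dR 0 0 + S3incl O R 0 r, S3dsh O R dR 0 (S3incl O R 0 r)), S3dP O A 0 q)
        = ((r, 0), p)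
      rw [map_zero, zero_add, hq]
      refine Prod.ext (Prod.ext rfl ?_) rfl
      exact Subsingleton.elim _ _
    · rintro _ ⟨⟨⟨y, t⟩, q⟩, rfl⟩
      show S3πP O A (S3dP O A 0 q) = 0
      have : S3dP O A 0 q ∈ LinearMap.ker (S3πP O A) := by
        rw [S3P_exact0]; exact ⟨q, rfl⟩
      exact this
  · -- exactness ker dE n = range dE (n+1)
    intro n
    apply le_antisymm
    · rintro ⟨⟨x, s⟩, p⟩ hmem
      have h1 : dR n x + S3incl O R n s = 0 := congrArg (fun z => z.1.1) hmem
      have h3 : S3dP O A n p = 0 := congrArg (fun z => z.2) hmem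
      have hp : p ∈ LinearMap.range (S3dP O A (n+1)) := by
        rw [← S3P_exact]; exact h3
      obtain ⟨q, hq⟩ := hp
      refine ⟨((0, x), q), ?_⟩
      have hs : S3incl O R n s = -(dR n x) := by
        rwa [add_comm, add_eq_zero_iff_eq_neg] at h1
      show ((dR (n+1) 0 + S3incl O R (n+1) x, S3dsh O R dR (n+1) (S3incl O R (n+1) x)),
        S3dP O A (n+1) q) = ((x, s), p)
      rw [map_zero, zero_add, hq]
      refine Prod.ext (Prod.ext rfl ?_) rfl
      show -(dR n x) = s
      exact hs.symm
    · rintro _ ⟨⟨⟨y, t⟩, q⟩, rfl⟩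
      show ((dR n (dR (n+1) y + S3incl O R (n+1) t)
            + S3incl O R n (S3dsh O R dR (n+1) (S3incl O R (n+1) t)),
          S3dsh O R dR n (S3incl O R n (S3dsh O R dR (n+1) (S3incl O R (n+1) t)))),
          S3dP O A n (S3dP O A (n+1) q)) = 0
      have hq0 : S3dP O A n (S3dP O A (n+1) q) = 0 := by
        have : S3dP O A (n+1) q ∈ LinearMap.ker (S3dP O A n) := by
          rw [S3P_exact]; exact ⟨q, rfl⟩
        exact this
      have hcone1 : S3incl O R n (S3dsh O R dR (n+1) (S3incl O R (n+1) t))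
          = -(dR n (S3incl O R (n+1) t)) := rfl
      rw [hcone1, map_add, hdR, zero_add, add_neg_cancel, hq0]
      refine Prod.ext (Prod.ext rfl ?_) rfl
      show S3dsh O R dR n (-(dR n (S3incl O R (n+1) t))) = 0
      rw [map_neg, S3dsh_d O R dR hdR, neg_zero]
  · -- injectivity of ι
    intro n x y h
    exact congrArg (fun z => z.1.1) h
  · -- chain map
    intro n x
    show ((dR n x + S3incl O R n 0, S3dsh O R dR n (S3incl O R n 0)),
        S3dP O A n (φ (n+1) x)) = ((dR n x, 0), φ n (dR n x))
    rw [map_zero, add_zero, map_zero, S3phi_chain]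
  · -- compatibility with augmentations
    intro x
    exact S3phi_zero O A R hRproj dR hdR πR hπR x
  · -- complement
    intro n
    haveI := hRshProj n
    haveI := hRproj n
    let j : (S3Rsh R n × P n) →ₗ[O] ((R n × S3Rsh R n) × P n) :=
      ((0 : (S3Rsh R n × P n) →ₗ[O] R n).prod (LinearMap.fst O _ _)).prod (LinearMap.snd O _ _)
    have hj : Function.Injective j := by
      intro a b h
      exact Prod.ext (congrArg (fun z => z.1.2) h) (congrArg (fun z => z.2) h)
    refine ⟨LinearMap.range j,
      Module.Projective.of_equiv (LinearEquiv.ofInjective j hj), ?_, ?_⟩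
    · rw [Submodule.disjoint_def]
      rintro _ ⟨r, rfl⟩ ⟨⟨s, p⟩, h⟩
      have hr : (0 : R n) = r := congrArg (fun z => z.1.1) h
      rw [← hr]
      show ((LinearMap.id.prod 0).prod (φ n)) 0 = 0
      exact map_zero _
    · rw [codisjoint_iff, eq_top_iff]
      rintro ⟨⟨r, s⟩, p⟩ _
      refine Submodule.mem_sup.2 ⟨((r, 0), φ n r), ⟨r, rfl⟩,
        ((0, s), p - φ n r), ⟨(s, p - φ n r), rfl⟩, ?_⟩
      refine Prod.ext (Prod.ext ?_ ?_) ?_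
      · exact add_zero r
      · exact zero_add s
      · exact add_sub_cancel (φ n r) p
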